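/- Let α_i > 0 (i = 1,…,s) and β > 0, let ℳ = {M_0, M_1, M_2} be a triple of (n+m) × (n+m) matrices, and suppose T_ℳ is well-defined. Then T_ℳ is continuous: for any sequence {(u^k, w^k, z^k)} with z^k = T_ℳ(u^k, w^k) converging to (u, w, z), one has z = T_ℳ(u, w). -/

import Mathlib

open Matrix Filter Topology

noncomputable section

/-- Spectral norm (largest singular value) of a real matrix. -/
def specNorm {p q : Type*} [Fintype p] [Fintype q] [DecidableEq q]
    (M : Matrix p q ℝ) : ℝ :=
  ‖LinearMap.toContinuousLinearMap (Matrix.toEuclideanLin M)‖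

/-- The positive semidefinite square root of a positive semidefinite matrix, as in the
older Mathlib (`Matrix.PosSemidef.sqrt`, since removed). -/
def Matrix.PosSemidef.sqrt {n : Type*} [Fintype n] [DecidableEq n]
    {A : Matrix n n ℝ} (hA : A.PosSemidef) : Matrix n n ℝ :=
  (hA.1.eigenvectorUnitary : Matrix n n ℝ) *
    diagonal ((↑) ∘ (Real.sqrt ∘ hA.1.eigenvalues)) *
    (star hA.1.eigenvectorUnitary : Matrix n n ℝ)

/-- Condition-M for a triple of matrices: `M0 = M1 + M2`, `H := M0 + M2` is symmetric
positive definite, and `‖H^{-1/2} M2 H^{-1/2}‖₂ < 1/2` (here `H^{-1/2}` is the positive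
semidefinite square root of `H⁻¹`). -/
def ConditionM {d : Type*} [Fintype d] [DecidableEq d] (M0 M1 M2 : Matrix d d ℝ) : Prop :=
  M0 = M1 + M2 ∧ ∃ hH : (M0 + M2).PosDef,
    specNorm (hH.inv.posSemidef.sqrt * M2 * hH.inv.posSemidef.sqrt) < 1 / 2

/-- The cost functional defining the proximity operator `prox_{φ,H}` at input `x`. -/
def proxCost {ι : Type*} [Fintype ι] (φ : (ι → ℝ) → EReal) (H : Matrix ι ι ℝ)
    (x u : ι → ℝ) : EReal :=
  ((((1 : ℝ) / 2) * ((u - x) ⬝ᵥ H.mulVec (u - x)) : ℝ) : EReal) + φ u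

/-- `p = prox_{φ,H}(x)`: `p` is the unique minimizer of the prox cost. -/
def IsProx {ι : Type*} [Fintype ι] (φ : (ι → ℝ) → EReal) (H : Matrix ι ι ℝ)
    (x p : ι → ℝ) : Prop :=
  (∀ u, proxCost φ H x p ≤ proxCost φ H x u) ∧
  ∀ q, (∀ u, proxCost φ H x q ≤ proxCost φ H x u) → q = p

/-- Proper lower semicontinuous convex extended-real-valued function. -/
def ProperConvexLsc {ι : Type*} [Fintype ι] (f : (ι → ℝ) → EReal) : Prop :=
  (∃ x, f x ≠ ⊤) ∧ (∀ x, f x ≠ ⊥) ∧ LowerSemicontinuous f ∧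
  ∀ x y : ι → ℝ, ∀ t : ℝ, 0 < t → t < 1 →
    f (t • x + (1 - t) • y) ≤ (t : EReal) * f x + ((1 - t : ℝ) : EReal) * f y

/-- Scaling of an extended-real-valued function by a real constant. -/
def smulF {V : Type*} (c : ℝ) (φ : V → EReal) : V → EReal := fun u => (c : EReal) * φ u

/-- The conjugate of the indicator of `C = {b}`: `ι_C*(y) = ⟨y, b⟩`. -/
def iotaCstar {m : ℕ} (b : Fin m → ℝ) : (Fin m → ℝ) → EReal :=
  fun y => ((y ⬝ᵥ b : ℝ) : EReal)

variable {s m : ℕ} {n : Fin s → ℕ}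

/-- Index type for the concatenated variable `x = (x_1, …, x_s)`. -/
abbrev XIdx (n : Fin s → ℕ) := (i : Fin s) × Fin (n i)

/-- Index type for the full variable `v = (x, y)`. -/
abbrev FIdx (n : Fin s → ℕ) (m : ℕ) := XIdx n ⊕ Fin m

/-- The `i`-th block of a concatenated vector. -/
def blk (x : XIdx n → ℝ) (i : Fin s) : Fin (n i) → ℝ := fun j => x ⟨i, j⟩

/-- The matrix `A = [A_1 … A_s]`. -/
def bigA (A : ∀ i : Fin s, Matrix (Fin m) (Fin (n i)) ℝ) : Matrix (Fin m) (XIdx n) ℝ :=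
  Matrix.of fun r p => A p.1 r p.2

/-- The separable objective `∑ f_i(x_i)`. -/
def objSum (f : ∀ i : Fin s, (Fin (n i) → ℝ) → EReal) (x : XIdx n → ℝ) : EReal :=
  ∑ i, f i (blk x i)

/-- `∑ A_i x_i`. -/
def sumAx (A : ∀ i : Fin s, Matrix (Fin m) (Fin (n i)) ℝ) (x : XIdx n → ℝ) : Fin m → ℝ :=
  ∑ i, (A i).mulVec (blk x i)

/-- `x` is a solution of problem (P). -/
def IsSolution (f : ∀ i : Fin s, (Fin (n i) → ℝ) → EReal)
    (A : ∀ i : Fin s, Matrix (Fin m) (Fin (n i)) ℝ) (b : Fin m → ℝ)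
    (x : XIdx n → ℝ) : Prop :=
  sumAx A x = b ∧ ∀ z : XIdx n → ℝ, sumAx A z = b → objSum f x ≤ objSum f z

/-- `b ∈ A(ri(dom(∑ f_i)))` where `ri` is the relative (intrinsic) interior. -/
def RiCond (f : ∀ i : Fin s, (Fin (n i) → ℝ) → EReal)
    (A : ∀ i : Fin s, Matrix (Fin m) (Fin (n i)) ℝ) (b : Fin m → ℝ) : Prop :=
  b ∈ (fun x => sumAx A x) '' intrinsicInterior ℝ {x : XIdx n → ℝ | objSum f x ≠ ⊤}

/-- The `x`-part of a full vector. -/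
def xpart (v : FIdx n m → ℝ) : XIdx n → ℝ := fun p => v (Sum.inl p)

/-- The `y`-part of a full vector. -/
def ypart (v : FIdx n m → ℝ) : Fin m → ℝ := fun r => v (Sum.inr r)

/-- The function `Φ(x_1,…,x_s,y) = ∑ f_i(x_i) + ι_C*(y)`. -/
def PhiFun (f : ∀ i : Fin s, (Fin (n i) → ℝ) → EReal) (b : Fin m → ℝ)
    (v : FIdx n m → ℝ) : EReal :=
  objSum f (xpart v) + iotaCstar b (ypart v)

/-- The diagonal matrix `R = diag((β/α_1)I, …, (β/α_s)I, (1/β)I)`. -/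
def Rmat (α : Fin s → ℝ) (β : ℝ) : Matrix (FIdx n m) (FIdx n m) ℝ :=
  Matrix.diagonal (Sum.elim (fun p : XIdx n => β / α p.1) fun _ => 1 / β)

/-- The inverse `R⁻¹` of the diagonal matrix `R`. -/
def Rinv (α : Fin s → ℝ) (β : ℝ) : Matrix (FIdx n m) (FIdx n m) ℝ :=
  Matrix.diagonal (Sum.elim (fun p : XIdx n => α p.1 / β) fun _ => β)

/-- The expansive matrix `E = [[I, −P⁻¹Aᵀ],[βA, I]]`. -/
def Emat (A : ∀ i : Fin s, Matrix (Fin m) (Fin (n i)) ℝ) (α : Fin s → ℝ) (β : ℝ) :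
    Matrix (FIdx n m) (FIdx n m) ℝ :=
  Matrix.fromBlocks 1 (-(Matrix.diagonal (fun p : XIdx n => α p.1 / β) * (bigA A)ᵀ))
    (β • bigA A) 1

/-- The skew-symmetric matrix `S_A = [[0, −Aᵀ],[A, 0]]`. -/
def SAmat (A : ∀ i : Fin s, Matrix (Fin m) (Fin (n i)) ℝ) :
    Matrix (FIdx n m) (FIdx n m) ℝ :=
  Matrix.fromBlocks 0 (-(bigA A)ᵀ) (bigA A) 0

/-- `w = 𝒯(v)`, where `𝒯(x_1,…,x_s,y) = (prox_{(α_1/β)f_1}x_1, …, prox_{(α_s/β)f_s}x_s,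
prox_{β ι_C*}y)`. -/
def isT (f : ∀ i : Fin s, (Fin (n i) → ℝ) → EReal) (b : Fin m → ℝ)
    (α : Fin s → ℝ) (β : ℝ) (v w : FIdx n m → ℝ) : Prop :=
  (∀ i, IsProx (smulF (α i / β) (f i)) 1 (blk (xpart v) i) (blk (xpart w) i)) ∧
  IsProx (smulF β (iotaCstar b)) 1 (ypart v) (ypart w)

/-- `w = T_ℳ(u₁, u₂)`, i.e. `w = 𝒯((E − R⁻¹M₀)w + R⁻¹M₁u₁ + R⁻¹M₂u₂)`. -/
def isTM (f : ∀ i : Fin s, (Fin (n i) → ℝ) → EReal)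
    (A : ∀ i : Fin s, Matrix (Fin m) (Fin (n i)) ℝ) (b : Fin m → ℝ)
    (α : Fin s → ℝ) (β : ℝ) (M0 M1 M2 : Matrix (FIdx n m) (FIdx n m) ℝ)
    (u1 u2 w : FIdx n m → ℝ) : Prop :=
  isT f b α β ((Emat A α β - Rinv α β * M0).mulVec w + (Rinv α β * M1).mulVec u1
    + (Rinv α β * M2).mulVec u2) w

/-- `T_ℳ` is well-defined. -/
def TMWellDefined (f : ∀ i : Fin s, (Fin (n i) → ℝ) → EReal)
    (A : ∀ i : Fin s, Matrix (Fin m) (Fin (n i)) ℝ) (b : Fin m → ℝ)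
    (α : Fin s → ℝ) (β : ℝ) (M0 M1 M2 : Matrix (FIdx n m) (FIdx n m) ℝ) : Prop :=
  ∀ u1 u2 : FIdx n m → ℝ, ∃! w, isTM f A b α β M0 M1 M2 u1 u2 w


namespace TMAux

open Matrix Filter Topology

variable {ι : Type*} [Fintype ι] [DecidableEq ι]

/-- The quadratic part of the prox cost with `H = 1`. -/
def Q (x u : ι → ℝ) : ℝ := (1 / 2) * ((u - x) ⬝ᵥ (u - x))

lemma proxCost_one (φ : (ι → ℝ) → EReal) (x u : ι → ℝ) :
    proxCost φ 1 x u = ((Q x u : ℝ) : EReal) + φ u := by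
  unfold proxCost Q
  rw [Matrix.one_mulVec]

lemma coe_mul_ne_bot (c : ℝ) (hc : 0 < c) {a : EReal} (ha : a ≠ ⊥) : (c : EReal) * a ≠ ⊥ := by
  induction a using EReal.rec with
  | bot => exact absurd rfl ha
  | coe r => rw [← EReal.coe_mul]; exact EReal.coe_ne_bot _
  | top => rw [EReal.coe_mul_top_of_pos hc]; simp

lemma coe_lt_coe_mul (c : ℝ) (hc : 0 < c) {b : EReal} {Y : ℝ} (h : (Y : EReal) < b) :
    ((c * Y : ℝ) : EReal) < (c : EReal) * b := by
  induction b using EReal.rec with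
  | bot => exact absurd h (by simp)
  | coe r =>
    rw [← EReal.coe_mul, EReal.coe_lt_coe_iff]
    exact mul_lt_mul_of_pos_left (EReal.coe_lt_coe_iff.1 h) hc
  | top => rw [EReal.coe_mul_top_of_pos hc]; exact EReal.coe_lt_top _

lemma coe_mul_le_coe (c : ℝ) (hc : 0 < c) {a : EReal} {r : ℝ} (h : a ≤ (r : EReal)) :
    (c : EReal) * a ≤ ((c * r : ℝ) : EReal) := by
  induction a using EReal.rec with
  | bot => rw [EReal.coe_mul_bot_of_pos hc]; exact bot_le
  | coe t =>
    rw [← EReal.coe_mul, EReal.coe_le_coe_iff]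
    exact mul_le_mul_of_nonneg_left (EReal.coe_le_coe_iff.1 h) hc.le
  | top => exact absurd h (by simp)

lemma eq_coe_of_mul_eq_coe (c : ℝ) (hc : 0 < c) {a : EReal} (ha : a ≠ ⊥) {r : ℝ}
    (h : (c : EReal) * a = (r : EReal)) : a = ((r / c : ℝ) : EReal) := by
  induction a using EReal.rec with
  | bot => exact absurd rfl ha
  | coe t =>
    rw [← EReal.coe_mul, EReal.coe_eq_coe_iff] at h
    rw [EReal.coe_eq_coe_iff]
    field_simp
    linarith [h]
  | top => rw [EReal.coe_mul_top_of_pos hc] at h; exact absurd h (by simp)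

lemma tendsto_Q {x p : ℕ → ι → ℝ} {xl pl : ι → ℝ}
    (hx : Filter.Tendsto x Filter.atTop (nhds xl)) (hp : Filter.Tendsto p Filter.atTop (nhds pl)) :
    Filter.Tendsto (fun k => Q (x k) (p k)) Filter.atTop (nhds (Q xl pl)) := by
  have h1 : Filter.Tendsto (fun k => (p k - x k) ⬝ᵥ (p k - x k)) Filter.atTop
      (nhds ((pl - xl) ⬝ᵥ (pl - xl))) := by
    unfold dotProduct
    refine tendsto_finset_sum _ fun j _ => ?_
    have hxj : Filter.Tendsto (fun k => x k j) Filter.atTop (nhds (xl j)) := tendsto_pi_nhds.1 hx j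
    have hpj : Filter.Tendsto (fun k => p k j) Filter.atTop (nhds (pl j)) := tendsto_pi_nhds.1 hp j
    have h2 := (hpj.sub hxj).mul (hpj.sub hxj)
    simpa [Pi.sub_apply] using h2
  unfold Q
  exact h1.const_mul (1 / 2 : ℝ)

/-- The limit of prox minimizers along converging sequences is a minimizer. -/
lemma limit_min (φ : (ι → ℝ) → EReal) (hbot : ∀ v, φ v ≠ ⊥) (hlsc : LowerSemicontinuous φ)
    (x p : ℕ → ι → ℝ) (xl pl : ι → ℝ)
    (hx : Filter.Tendsto x Filter.atTop (nhds xl)) (hp : Filter.Tendsto p Filter.atTop (nhds pl))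
    (hmin : ∀ k u, proxCost φ 1 (x k) (p k) ≤ proxCost φ 1 (x k) u) :
    ∀ u, proxCost φ 1 xl pl ≤ proxCost φ 1 xl u := by
  intro u
  by_contra hcon
  push_neg at hcon
  rw [proxCost_one, proxCost_one] at hcon
  have hut : φ u ≠ ⊤ := by
    intro ht
    rw [ht, EReal.coe_add_top] at hcon
    exact not_top_lt hcon
  obtain ⟨r, hr⟩ : ∃ r : ℝ, φ u = (r : EReal) := ⟨(φ u).toReal, (EReal.coe_toReal hut (hbot u)).symm⟩
  rw [hr, ← EReal.coe_add] at hcon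
  -- hcon : ((Q xl u + r : ℝ) : EReal) < (Q xl pl : EReal) + φ pl
  have key : ((Q xl u + r - Q xl pl : ℝ) : EReal) < φ pl := by
    by_contra hk
    push_neg at hk
    have h1 := add_le_add_right hk ((Q xl pl : ℝ) : EReal)
    rw [← EReal.coe_add] at h1
    have h2 : (Q xl pl + (Q xl u + r - Q xl pl) : ℝ) = (Q xl u + r : ℝ) := by ring
    rw [h2] at h1
    exact absurd (hcon.trans_le h1) (lt_irrefl _)
  obtain ⟨y, hy1, hy2⟩ := EReal.exists_between_coe_real key
  rw [EReal.coe_lt_coe_iff] at hy1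
  have hev1 : ∀ᶠ k in Filter.atTop, (y : EReal) < φ (p k) :=
    hp.eventually (hlsc pl _ hy2)
  have hQ1 := tendsto_Q hx hp
  have hQ2 := tendsto_Q hx (tendsto_const_nhds : Filter.Tendsto (fun _ : ℕ => u) _ _)
  have hev2 : ∀ᶠ k in Filter.atTop, 0 < Q (x k) (p k) + y - (Q (x k) u + r) := by
    have hL : Filter.Tendsto (fun k => Q (x k) (p k) + y - (Q (x k) u + r)) Filter.atTop
        (nhds (Q xl pl + y - (Q xl u + r))) := (hQ1.add_const y).sub (hQ2.add_const r)
    exact hL.eventually_const_lt (by linarith)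
  obtain ⟨k, hk1, hk2⟩ := (hev1.and hev2).exists
  have hchain : ((Q (x k) u + r : ℝ) : EReal) < (Q (x k) (p k) : ℝ) + φ (p k) := by
    calc ((Q (x k) u + r : ℝ) : EReal) < ((Q (x k) (p k) + y : ℝ) : EReal) := by
          rw [EReal.coe_lt_coe_iff]; linarith
      _ = ((Q (x k) (p k) : ℝ) : EReal) + (y : EReal) := by rw [← EReal.coe_add]
      _ ≤ ((Q (x k) (p k) : ℝ) : EReal) + φ (p k) := add_le_add_right hk1.le _
  have := hmin k u
  rw [proxCost_one, proxCost_one, hr, ← EReal.coe_add] at this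
  exact absurd (hchain.trans_le this) (lt_irrefl _)

lemma Q_mid (x p q : ι → ℝ) :
    Q x ((1 / 2 : ℝ) • p + (1 / 2 : ℝ) • q)
      = Q x p / 2 + Q x q / 2 - ((p - q) ⬝ᵥ (p - q)) / 8 := by
  have hv : (1 / 2 : ℝ) • p + (1 / 2 : ℝ) • q - x
      = (1 / 2 : ℝ) • (p - x) + (1 / 2 : ℝ) • (q - x) := by
    ext j; simp; ring
  have hpq : p - q = (p - x) - (q - x) := by ext j; simp
  rw [Q, Q, Q, hv, hpq]
  simp only [add_dotProduct, dotProduct_add, smul_dotProduct,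
    dotProduct_smul, sub_dotProduct, dotProduct_sub, smul_eq_mul]
  rw [dotProduct_comm q p, dotProduct_comm x p, dotProduct_comm x q]
  ring

/-- Minimizers of the prox cost are unique for midpoint-convex `φ`. -/
lemma uniq_min (φ : (ι → ℝ) → EReal) (hbot : ∀ v, φ v ≠ ⊥) (hproper : ∃ v, φ v ≠ ⊤)
    (hconv : ∀ a b : ι → ℝ, ∀ ra rb : ℝ, φ a = (ra : EReal) → φ b = (rb : EReal) →
      φ ((1 / 2 : ℝ) • a + (1 / 2 : ℝ) • b) ≤ ((ra / 2 + rb / 2 : ℝ) : EReal))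
    (x p : ι → ℝ) (hp : ∀ u, proxCost φ 1 x p ≤ proxCost φ 1 x u)
    (q : ι → ℝ) (hq : ∀ u, proxCost φ 1 x q ≤ proxCost φ 1 x u) : q = p := by
  by_contra hne
  obtain ⟨v0, hv0⟩ := hproper
  obtain ⟨r0, hr0⟩ : ∃ r : ℝ, φ v0 = (r : EReal) :=
    ⟨(φ v0).toReal, (EReal.coe_toReal hv0 (hbot v0)).symm⟩
  have hreal : ∀ z : ι → ℝ, (∀ u, proxCost φ 1 x z ≤ proxCost φ 1 x u) →
      ∃ rz : ℝ, φ z = (rz : EReal) := by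
    intro z hz
    have h := hz v0
    rw [proxCost_one, proxCost_one, hr0, ← EReal.coe_add] at h
    have hzt : φ z ≠ ⊤ := by
      intro ht
      rw [ht, EReal.coe_add_top] at h
      exact absurd (h.trans_lt (EReal.coe_lt_top _)) (lt_irrefl _)
    exact ⟨(φ z).toReal, (EReal.coe_toReal hzt (hbot z)).symm⟩
  obtain ⟨rp, hrp⟩ := hreal p hp
  obtain ⟨rq, hrq⟩ := hreal q hq
  -- both values are equal
  have h1 := hp q
  have h2 := hq p
  rw [proxCost_one, proxCost_one, hrp, hrq, ← EReal.coe_add, ← EReal.coe_add,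
    EReal.coe_le_coe_iff] at h1 h2
  have hval : Q x p + rp = Q x q + rq := le_antisymm h1 h2
  -- the strict gap
  have hd : 0 < (p - q) ⬝ᵥ (p - q) := by
    rcases lt_or_eq_of_le (Finset.sum_nonneg fun j _ => mul_self_nonneg ((p - q) j) :
        (0 : ℝ) ≤ (p - q) ⬝ᵥ (p - q)) with h | h
    · exact h
    · exact absurd (sub_eq_zero.1 (dotProduct_self_eq_zero.1 h.symm)).symm hne
  have hmidφ := hconv p q rp rq hrp hrq
  have hfinal := hp ((1 / 2 : ℝ) • p + (1 / 2 : ℝ) • q)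
  rw [proxCost_one, proxCost_one, hrp, ← EReal.coe_add, Q_mid] at hfinal
  have hle : ((Q x p / 2 + Q x q / 2 - (p - q) ⬝ᵥ (p - q) / 8 : ℝ) : EReal) + φ ((1 / 2 : ℝ) • p + (1 / 2 : ℝ) • q)
      ≤ ((Q x p / 2 + Q x q / 2 - (p - q) ⬝ᵥ (p - q) / 8 + (rp / 2 + rq / 2) : ℝ) : EReal) := by
    rw [EReal.coe_add (Q x p / 2 + Q x q / 2 - (p - q) ⬝ᵥ (p - q) / 8) (rp / 2 + rq / 2)]
    exact add_le_add_right hmidφ _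
  have hlt : ((Q x p + rp : ℝ) : EReal) ≤ ((Q x p / 2 + Q x q / 2 - (p - q) ⬝ᵥ (p - q) / 8 + (rp / 2 + rq / 2) : ℝ) : EReal) :=
    hfinal.trans hle
  rw [EReal.coe_le_coe_iff] at hlt
  linarith

/-- Graph-closedness of the prox operator. -/
lemma isProx_closed (φ : (ι → ℝ) → EReal) (hbot : ∀ v, φ v ≠ ⊥)
    (hlsc : LowerSemicontinuous φ) (hproper : ∃ v, φ v ≠ ⊤)
    (hconv : ∀ a b : ι → ℝ, ∀ ra rb : ℝ, φ a = (ra : EReal) → φ b = (rb : EReal) →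
      φ ((1 / 2 : ℝ) • a + (1 / 2 : ℝ) • b) ≤ ((ra / 2 + rb / 2 : ℝ) : EReal))
    (x p : ℕ → ι → ℝ) (xl pl : ι → ℝ)
    (hx : Filter.Tendsto x Filter.atTop (nhds xl)) (hp : Filter.Tendsto p Filter.atTop (nhds pl))
    (h : ∀ k, IsProx φ 1 (x k) (p k)) : IsProx φ 1 xl pl := by
  have hm := limit_min φ hbot hlsc x p xl pl hx hp (fun k => (h k).1)
  exact ⟨hm, fun q hq => uniq_min φ hbot hproper hconv xl pl hm q hq⟩

/-- Never-`⊥` for a positive scalar multiple. -/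
lemma smulF_ne_bot (c : ℝ) (hc : 0 < c) (f : (ι → ℝ) → EReal) (hbot : ∀ v, f v ≠ ⊥) :
    ∀ v, smulF c f v ≠ ⊥ := fun v => coe_mul_ne_bot c hc (hbot v)

/-- Properness for a positive scalar multiple. -/
lemma smulF_proper (c : ℝ) (hc : 0 < c) (f : (ι → ℝ) → EReal) (hbot : ∀ v, f v ≠ ⊥)
    (hproper : ∃ v, f v ≠ ⊤) : ∃ v, smulF c f v ≠ ⊤ := by
  obtain ⟨v, hv⟩ := hproper
  refine ⟨v, ?_⟩
  obtain ⟨r, hr⟩ : ∃ r : ℝ, f v = (r : EReal) := ⟨(f v).toReal, (EReal.coe_toReal hv (hbot v)).symm⟩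
  rw [smulF, hr, ← EReal.coe_mul]
  exact EReal.coe_ne_top _

/-- Lower semicontinuity of a positive scalar multiple. -/
lemma smulF_lsc (c : ℝ) (hc : 0 < c) (f : (ι → ℝ) → EReal) (hbot : ∀ v, f v ≠ ⊥)
    (hlsc : LowerSemicontinuous f) : LowerSemicontinuous (smulF c f) := by
  intro x y
  induction y using EReal.rec with
  | bot =>
    intro _
    filter_upwards with v
    exact bot_lt_iff_ne_bot.2 (coe_mul_ne_bot c hc (hbot v))
  | coe Y =>
    intro hy
    have hYc : c * (Y / c) = Y := by field_simp
    have h1 : ((Y / c : ℝ) : EReal) < f x := by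
      by_contra hk
      push_neg at hk
      have h2 := coe_mul_le_coe c hc hk
      rw [hYc] at h2
      exact absurd (hy.trans_le h2) (lt_irrefl _)
    filter_upwards [hlsc x _ h1] with v hv
    have h3 := coe_lt_coe_mul c hc hv
    rw [hYc] at h3
    exact h3
  | top => intro hy; exact absurd hy not_top_lt

/-- Midpoint convexity (in the real-valued form) of a positive scalar multiple of a
proper convex function. -/
lemma smulF_conv (c : ℝ) (hc : 0 < c) (f : (ι → ℝ) → EReal) (hbot : ∀ v, f v ≠ ⊥)
    (hcvx : ∀ x y : (ι → ℝ), ∀ t : ℝ, 0 < t → t < 1 →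
      f (t • x + (1 - t) • y) ≤ (t : EReal) * f x + ((1 - t : ℝ) : EReal) * f y) :
    ∀ a b : ι → ℝ, ∀ ra rb : ℝ, smulF c f a = (ra : EReal) → smulF c f b = (rb : EReal) →
      smulF c f ((1 / 2 : ℝ) • a + (1 / 2 : ℝ) • b) ≤ ((ra / 2 + rb / 2 : ℝ) : EReal) := by
  intro a b ra rb ha hb
  have hfa : f a = ((ra / c : ℝ) : EReal) := eq_coe_of_mul_eq_coe c hc (hbot a) ha
  have hfb : f b = ((rb / c : ℝ) : EReal) := eq_coe_of_mul_eq_coe c hc (hbot b) hb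
  have h := hcvx a b (1 / 2) (by norm_num) (by norm_num)
  have e : (1 - 1 / 2 : ℝ) = 1 / 2 := by norm_num
  rw [e, hfa, hfb, ← EReal.coe_mul, ← EReal.coe_mul, ← EReal.coe_add] at h
  have h2 := coe_mul_le_coe c hc h
  have e2 : c * (1 / 2 * (ra / c) + 1 / 2 * (rb / c)) = ra / 2 + rb / 2 := by
    field_simp
  rw [e2] at h2
  exact h2

/-- The scaled conjugate-indicator function, as a real-valued function. -/
lemma smulF_iotaCstar {m : ℕ} (β : ℝ) (b : Fin m → ℝ) (y : Fin m → ℝ) :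
    smulF β (iotaCstar b) y = ((β * (y ⬝ᵥ b) : ℝ) : EReal) := by
  rw [smulF, iotaCstar, ← EReal.coe_mul]

lemma iota_lsc {m : ℕ} (β : ℝ) (b : Fin m → ℝ) :
    LowerSemicontinuous (smulF β (iotaCstar b)) := by
  have hg : Continuous fun y : Fin m → ℝ => β * (y ⬝ᵥ b) := by
    unfold dotProduct
    exact continuous_const.mul (continuous_finset_sum _ fun j _ =>
      (continuous_apply j).mul continuous_const)
  have heq : smulF β (iotaCstar b) = fun y => ((β * (y ⬝ᵥ b) : ℝ) : EReal) :=
    funext fun y => smulF_iotaCstar β b y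
  rw [heq]
  exact (continuous_coe_real_ereal.comp hg).lowerSemicontinuous

lemma iota_conv {m : ℕ} (β : ℝ) (b : Fin m → ℝ) :
    ∀ a a' : Fin m → ℝ, ∀ ra rb : ℝ, smulF β (iotaCstar b) a = (ra : EReal) →
      smulF β (iotaCstar b) a' = (rb : EReal) →
      smulF β (iotaCstar b) ((1 / 2 : ℝ) • a + (1 / 2 : ℝ) • a')
        ≤ ((ra / 2 + rb / 2 : ℝ) : EReal) := by
  intro a a' ra rb ha hb
  rw [smulF_iotaCstar, EReal.coe_eq_coe_iff] at ha hb
  rw [smulF_iotaCstar, EReal.coe_le_coe_iff]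
  have hdot : ((1 / 2 : ℝ) • a + (1 / 2 : ℝ) • a') ⬝ᵥ b
      = (1 / 2) * (a ⬝ᵥ b) + (1 / 2) * (a' ⬝ᵥ b) := by
    rw [add_dotProduct, smul_dotProduct, smul_dotProduct, smul_eq_mul,
      smul_eq_mul]
  rw [hdot]
  rw [← ha, ← hb]
  ring_nf
  exact le_refl _

/-- Continuity of `mulVec` in the vector argument, in sequence form. -/
lemma tendsto_mulVec {d : Type*} [Fintype d] (M : Matrix d d ℝ)
    (v : ℕ → d → ℝ) (vl : d → ℝ) (hv : Filter.Tendsto v Filter.atTop (nhds vl)) :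
    Filter.Tendsto (fun k => M.mulVec (v k)) Filter.atTop (nhds (M.mulVec vl)) := by
  refine tendsto_pi_nhds.2 fun i => ?_
  unfold Matrix.mulVec dotProduct
  exact tendsto_finset_sum _ fun j _ =>
    (tendsto_pi_nhds.1 hv j).const_mul (M i j)

end TMAux
/-- if `T_ℳ` is well-defined then it is continuous: whenever
`z^k = T_ℳ(u^k, w^k)` and `(u^k, w^k, z^k) → (u, w, z)`, one has `z = T_ℳ(u, w)`. -/
theorem TM_continuous {s m : ℕ} {n : Fin s → ℕ}
    (f : ∀ i : Fin s, (Fin (n i) → ℝ) → EReal)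
    (A : ∀ i : Fin s, Matrix (Fin m) (Fin (n i)) ℝ) (b : Fin m → ℝ)
    (hf : ∀ i, ProperConvexLsc (f i))
    (α : Fin s → ℝ) (hα : ∀ i, 0 < α i) (β : ℝ) (hβ : 0 < β)
    (M0 M1 M2 : Matrix (FIdx n m) (FIdx n m) ℝ)
    (hwd : TMWellDefined f A b α β M0 M1 M2) :
    ∀ (u w z : ℕ → FIdx n m → ℝ) (ulim wlim zlim : FIdx n m → ℝ),
      (∀ k, isTM f A b α β M0 M1 M2 (u k) (w k) (z k)) →
      Tendsto u atTop (nhds ulim) → Tendsto w atTop (nhds wlim) →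
      Tendsto z atTop (nhds zlim) →
      isTM f A b α β M0 M1 M2 ulim wlim zlim := by
  intro u w z ulim wlim zlim hk hu hw hz
  unfold isTM isT at hk ⊢
  set T0 := Emat A α β - Rinv α β * M0 with hT0
  set T1 := Rinv α β * M1 with hT1
  set T2 := Rinv α β * M2 with hT2
  set V : ℕ → FIdx n m → ℝ :=
    fun k => T0.mulVec (z k) + T1.mulVec (u k) + T2.mulVec (w k) with hVdef
  set Vl : FIdx n m → ℝ := T0.mulVec zlim + T1.mulVec ulim + T2.mulVec wlim with hVl
  have hV : Filter.Tendsto V Filter.atTop (nhds Vl) :=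
    ((TMAux.tendsto_mulVec _ _ _ hz).add (TMAux.tendsto_mulVec _ _ _ hu)).add
      (TMAux.tendsto_mulVec _ _ _ hw)
  have hk' : ∀ k, (∀ i, IsProx (smulF (α i / β) (f i)) 1 (blk (xpart (V k)) i)
        (blk (xpart (z k)) i)) ∧
      IsProx (smulF β (iotaCstar b)) 1 (ypart (V k)) (ypart (z k)) := hk
  constructor
  · intro i
    have hc : 0 < α i / β := div_pos (hα i) hβ
    obtain ⟨hprop, hbot, hlsc, hcvx⟩ := hf i
    have htx : Filter.Tendsto (fun k => blk (xpart (V k)) i) Filter.atTop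
        (nhds (blk (xpart Vl) i)) :=
      tendsto_pi_nhds.2 fun j => tendsto_pi_nhds.1 hV (Sum.inl ⟨i, j⟩)
    have htp : Filter.Tendsto (fun k => blk (xpart (z k)) i) Filter.atTop
        (nhds (blk (xpart zlim) i)) :=
      tendsto_pi_nhds.2 fun j => tendsto_pi_nhds.1 hz (Sum.inl ⟨i, j⟩)
    exact TMAux.isProx_closed _ (TMAux.smulF_ne_bot _ hc _ hbot)
      (TMAux.smulF_lsc _ hc _ hbot hlsc)
      (TMAux.smulF_proper _ hc _ hbot hprop)
      (TMAux.smulF_conv _ hc _ hbot hcvx)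
      _ _ _ _ htx htp (fun k => (hk' k).1 i)
  · have hty : Filter.Tendsto (fun k => ypart (V k)) Filter.atTop (nhds (ypart Vl)) :=
      tendsto_pi_nhds.2 fun r => tendsto_pi_nhds.1 hV (Sum.inr r)
    have htq : Filter.Tendsto (fun k => ypart (z k)) Filter.atTop (nhds (ypart zlim)) :=
      tendsto_pi_nhds.2 fun r => tendsto_pi_nhds.1 hz (Sum.inr r)
    exact TMAux.isProx_closed _
      (fun v => by rw [TMAux.smulF_iotaCstar]; exact EReal.coe_ne_bot _)
      (TMAux.iota_lsc β b)
      ⟨0, by rw [TMAux.smulF_iotaCstar]; exact EReal.coe_ne_top _⟩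
      (TMAux.iota_conv β b)
      _ _ _ _ hty htq (fun k => (hk' k).2)

end
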